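/- Let g be a Lie algebra over a field k of characteristic zero and equip the symmetric algebra S(g) with its natural Poisson bracket (the unique Poisson bracket extending the Lie bracket on g). Then an element f ∈ S(g) is a semi-invariant (i.e. {x, f} ∈ k·f for all x ∈ g) if and only if f is Poisson normal (i.e. {S(g), f} ⊆ S(g)·f). -/

import Mathlib

/-- A Poisson bracket on a commutative `k`-algebra `A`: a `k`-bilinear Lie bracket
satisfying the Leibniz rule. -/
structure IsPoissonBracket (k : Type*) (A : Type*) [CommRing k] [CommRing A] [Algebra k A]
    (P : A → A → A) : Prop where
  add_left : ∀ a b c : A, P (a + b) c = P a c + P b c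
  smul_left : ∀ (r : k) (a b : A), P (r • a) b = r • P a b
  lie_skew : ∀ a b : A, P a b = - P b a
  jacobi : ∀ a b c : A, P a (P b c) + P b (P c a) + P c (P a b) = 0
  leibniz : ∀ a b c : A, P (a * b) c = a * P b c + b * P a c

/-- In the symmetric algebra of a Lie algebra (modelled abstractly: an integral domain
`A` generated by the image of `g`, with a grading placing `g` in degree 1 such that the
Poisson bracket drops degree by one), an element is a semi-invariant if and only if it
is Poisson normal. -/
theorem semiInvariant_iff_poissonNormal
    {k : Type*} [Field k] [CharZero k]
    {g : Type*} [LieRing g] [LieAlgebra k g]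
    {A : Type*} [CommRing A] [IsDomain A] [Algebra k A]
    (P : A → A → A) (hP : IsPoissonBracket k A P)
    (ι : g →ₗ[k] A) (hinj : Function.Injective ι)
    (hbr : ∀ x y : g, P (ι x) (ι y) = ι ⁅x, y⁆)
    (hgen : Algebra.adjoin k (Set.range ι) = ⊤)
    (𝒜 : ℕ → Submodule k A) (hinternal : DirectSum.IsInternal 𝒜)
    (hone : (1 : A) ∈ 𝒜 0)
    (h0 : ∀ a ∈ 𝒜 0, ∃ r : k, a = algebraMap k A r)
    (hmul : ∀ i j : ℕ, ∀ a ∈ 𝒜 i, ∀ b ∈ 𝒜 j, a * b ∈ 𝒜 (i + j))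
    (hg1 : ∀ x : g, ι x ∈ 𝒜 1)
    (hgrade : ∀ i j : ℕ, ∀ a ∈ 𝒜 i, ∀ b ∈ 𝒜 j, P a b ∈ 𝒜 (i + j - 1))
    (f : A) :
    (∀ x : g, ∃ r : k, P (ι x) f = algebraMap k A r * f) ↔
      (∀ a : A, ∃ c : A, P a f = c * f) := by
  classical
  -- basic consequences of the axioms
  have hzero_left : ∀ a : A, P 0 a = 0 := by
    intro a
    have h := hP.add_left 0 0 a
    rw [add_zero] at h
    exact (left_eq_add.mp h)
  have hzero_right : ∀ a : A, P a 0 = 0 := by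
    intro a
    rw [hP.lie_skew, hzero_left, neg_zero]
  have hadd_right : ∀ a b c : A, P a (b + c) = P a b + P a c := by
    intro a b c
    rw [hP.lie_skew, hP.add_left, neg_add, ← hP.lie_skew, ← hP.lie_skew]
  have hone_left : ∀ a : A, P 1 a = 0 := by
    intro a
    have h := hP.leibniz 1 1 a
    simp only [one_mul] at h
    exact (left_eq_add.mp h)
  -- `P a ·` as an additive monoid hom, for sums
  have hsum_right : ∀ (a : A) {ι' : Type} (s : Finset ι') (g : ι' → A),
      P a (∑ i ∈ s, g i) = ∑ i ∈ s, P a (g i) := by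
    intro a ι' s g
    exact map_sum (AddMonoidHom.mk' (fun b => P a b) (hadd_right a)) g s
  constructor
  · -- semi-invariant → Poisson normal
    intro h a
    have ha : a ∈ Algebra.adjoin k (Set.range ι) := hgen.symm ▸ Algebra.mem_top
    induction ha using Algebra.adjoin_induction with
    | mem x hx =>
      obtain ⟨y, rfl⟩ := hx
      obtain ⟨r, hr⟩ := h y
      exact ⟨algebraMap k A r, hr⟩
    | algebraMap r =>
      refine ⟨0, ?_⟩
      rw [Algebra.algebraMap_eq_smul_one, hP.smul_left, hone_left, smul_zero, zero_mul]
    | add x y hx hy hx' hy' =>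
      obtain ⟨cx, hcx⟩ := hx'
      obtain ⟨cy, hcy⟩ := hy'
      exact ⟨cx + cy, by rw [hP.add_left, hcx, hcy, add_mul]⟩
    | mul x y hx hy hx' hy' =>
      obtain ⟨cx, hcx⟩ := hx'
      obtain ⟨cy, hcy⟩ := hy'
      refine ⟨x * cy + y * cx, ?_⟩
      rw [hP.leibniz, hcx, hcy]; ring
  · -- Poisson normal → semi-invariant
    intro h x
    obtain ⟨c, hc⟩ := h (ι x)
    by_cases hf : f = 0
    · exact ⟨0, by rw [hf, hzero_right, map_zero, zero_mul]⟩
    by_cases hc0 : c = 0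
    · exact ⟨0, by rw [map_zero, zero_mul, hc, hc0, zero_mul]⟩
    -- set up the graded ring structure
    letI gm : SetLike.GradedMonoid 𝒜 :=
      { one_mem := hone, mul_mem := fun {i j gi gj} hi hj => hmul i j _ hi _ hj }
    letI dec : DirectSum.Decomposition 𝒜 := hinternal.chooseDecomposition
    letI : GradedRing 𝒜 := { gm, dec with }
    set F := DirectSum.decompose 𝒜 f with hF
    set C := DirectSum.decompose 𝒜 c with hCdef
    have hFne : F.support.Nonempty := by
      rw [Finset.nonempty_iff_ne_empty, Ne, DFinsupp.support_eq_empty]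
      intro hzero
      exact hf ((DirectSum.decompose 𝒜).injective
        (by rw [← hF, hzero, DirectSum.decompose_zero]))
    have hCne : C.support.Nonempty := by
      rw [Finset.nonempty_iff_ne_empty, Ne, DFinsupp.support_eq_empty]
      intro hzero
      exact hc0 ((DirectSum.decompose 𝒜).injective
        (by rw [← hCdef, hzero, DirectSum.decompose_zero]))
    set N := F.support.max' hFne with hN
    set D := C.support.max' hCne with hDdef
    -- components of `P (ι x) f` live in degrees ≤ N
    have hPf : P (ι x) f = ∑ n ∈ F.support, P (ι x) (F n : A) := by
      conv_lhs => rw [← DirectSum.sum_support_decompose 𝒜 f]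
      exact hsum_right _ _ _
    have hmem : ∀ n : ℕ, P (ι x) (F n : A) ∈ 𝒜 n := by
      intro n
      have h' := hgrade 1 n _ (hg1 x) _ (F n).2
      have : 1 + n - 1 = n := by omega
      rwa [this] at h'
    -- the top degree of c must be 0
    have hD : D = 0 := by
      by_contra hD0
      have hDpos : 0 < D := Nat.pos_of_ne_zero hD0
      -- component of c * f in degree D + N is (C D) * (F N) ≠ 0
      have h1 : ((DirectSum.decompose 𝒜 (c * f)) (D + N) : A) = (C D : A) * (F N : A) := by
        rw [DirectSum.decompose_mul, ← hCdef, ← hF, DirectSum.coe_mul_apply 𝒜 C F (D + N)]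
        have hset : (C.support ×ˢ F.support).filter
            (fun ij : ℕ × ℕ => ij.1 + ij.2 = D + N) = {(D, N)} := by
          apply Finset.eq_singleton_iff_unique_mem.mpr
          constructor
          · rw [Finset.mem_filter, Finset.mem_product]
            exact ⟨⟨Finset.max'_mem _ hCne, Finset.max'_mem _ hFne⟩, rfl⟩
          · rintro ⟨i, j⟩ hij
            rw [Finset.mem_filter, Finset.mem_product] at hij
            have h1 := Finset.le_max' _ i hij.1.1
            have h2 := Finset.le_max' _ j hij.1.2
            have := hij.2
            simp only [Prod.mk.injEq]
            constructor <;> omega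
        rw [hset, Finset.sum_singleton]
      -- but the component of `P (ι x) f` in degree D + N is 0
      have h2 : ((DirectSum.decompose 𝒜 (P (ι x) f)) (D + N) : A) = 0 := by
        rw [hPf, DirectSum.decompose_sum, DFinsupp.finset_sum_apply,
          AddSubmonoidClass.coe_finset_sum]
        apply Finset.sum_eq_zero
        intro n hn
        have hnN : n ≤ N := Finset.le_max' _ n hn
        exact DirectSum.decompose_of_mem_ne 𝒜 (hmem n) (by omega)
      rw [hc, h1] at h2
      have hCD : (C D : A) ≠ 0 := by
        intro hz
        exact (DFinsupp.mem_support_iff.mp (Finset.max'_mem _ hCne))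
          (Subtype.ext (by rw [hz]; rfl))
      have hFN : (F N : A) ≠ 0 := by
        intro hz
        exact (DFinsupp.mem_support_iff.mp (Finset.max'_mem _ hFne))
          (Subtype.ext (by rw [hz]; rfl))
      exact (mul_ne_zero hCD hFN) h2
    -- hence c is homogeneous of degree 0, i.e. a scalar
    have hc0mem : c ∈ 𝒜 0 := by
      rw [← DirectSum.sum_support_decompose 𝒜 c]
      apply Submodule.sum_mem
      intro i hi
      have : i ≤ D := Finset.le_max' _ i hi
      have hi0 : i = 0 := by omega
      rw [hi0]
      exact (C 0).2
    obtain ⟨r, hr⟩ := h0 c hc0mem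
    exact ⟨r, by rw [hc, hr]⟩
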